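/- Define the EPIC canonicalization C_EPIC(R)(s,a,s') = R(s,a,s') + E[γ·R(s',A,S') − R(s,A,S') − γ·R(S,A,S')], where S, S' are identically distributed according to D_S and A ∼ D_A. Then for any potential function φ and the shaped reward R'(s,a,s') = R(s,a,s') + γ·φ(s') − φ(s), one has C_EPIC(R') = C_EPIC(R). -/

import Mathlib

/-- The EPIC canonicalization is invariant to potential shaping, when the
states `S` and `S'` in the expectation are identically distributed (both
according to `DS`) and the action according to `DA`. -/
theorem stmt2 {St Ac : Type*} [Fintype St] [Fintype Ac]
    (R : St → Ac → St → ℝ) (γ : ℝ) (hγ0 : 0 ≤ γ) (hγ1 : γ ≤ 1)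
    (DS : St → ℝ) (DA : Ac → ℝ)
    (hDS0 : ∀ s, 0 ≤ DS s) (hDS1 : ∑ s, DS s = 1)
    (hDA0 : ∀ a, 0 ≤ DA a) (hDA1 : ∑ a, DA a = 1)
    (φ : St → ℝ) :
    let C := fun (Q : St → Ac → St → ℝ) (s : St) (a : Ac) (s' : St) =>
      Q s a s' + (∑ b, ∑ x, DA b * DS x * (γ * Q s' b x - Q s b x))
        - γ * ∑ y, ∑ b, ∑ x, DS y * DA b * DS x * Q y b x
    C (fun s a s' => R s a s' + γ * φ s' - φ s) = C R := by
  intro C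
  funext s a s'
  simp only [C]
  set Φ := ∑ x, DS x * φ x with hΦ
  have key : ∀ (f : St → ℝ), ∑ b, ∑ x, DA b * DS x * f x = ∑ x, DS x * f x := by
    intro f
    simp only [mul_assoc, ← Finset.mul_sum, ← Finset.sum_mul, hDA1, one_mul]
  have base : ∀ c d : ℝ, ∑ x, DS x * (γ * (γ * φ x - c) - (γ * φ x - d))
      = γ * γ * Φ - γ * c - γ * Φ + d := by
    intro c d
    have : ∀ x, DS x * (γ * (γ * φ x - c) - (γ * φ x - d))
        = γ * γ * (DS x * φ x) - γ * (DS x * c) - γ * (DS x * φ x) + DS x * d := by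
      intro x; ring
    simp only [this, Finset.sum_add_distrib, Finset.sum_sub_distrib,
      ← Finset.mul_sum, ← Finset.sum_mul, hDS1, one_mul, hΦ]
  have hS : (∑ b, ∑ x, DA b * DS x *
        (γ * (R s' b x + γ * φ x - φ s') - (R s b x + γ * φ x - φ s)))
      = (∑ b, ∑ x, DA b * DS x * (γ * R s' b x - R s b x))
        + (γ * γ * Φ - γ * φ s' - γ * Φ + φ s) := by
    have : ∀ b x, DA b * DS x *
        (γ * (R s' b x + γ * φ x - φ s') - (R s b x + γ * φ x - φ s))
        = DA b * DS x * (γ * R s' b x - R s b x)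
          + DA b * DS x * (γ * (γ * φ x - φ s') - (γ * φ x - φ s)) := by
      intro b x; ring
    simp only [this, Finset.sum_add_distrib, key, base]
  have hT : (∑ y, ∑ b, ∑ x, DS y * DA b * DS x * (R y b x + γ * φ x - φ y))
      = (∑ y, ∑ b, ∑ x, DS y * DA b * DS x * R y b x) + (γ * Φ - Φ) := by
    have h1 : ∀ y b x, DS y * DA b * DS x * (R y b x + γ * φ x - φ y)
        = DS y * DA b * DS x * R y b x
          + DS y * (DA b * DS x * (γ * φ x - φ y)) := by
      intro y b x; ring
    have h2 : ∀ y, ∑ b, ∑ x, DA b * DS x * (γ * φ x - φ y)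
        = ∑ x, DS x * (γ * φ x - φ y) := fun y => key _
    have h3 : ∀ y, ∑ x, DS x * (γ * φ x - φ y) = γ * Φ - φ y := by
      intro y
      have e : ∀ x, DS x * (γ * φ x - φ y) = γ * (DS x * φ x) - DS x * φ y := by
        intro x; ring
      simp only [e, Finset.sum_sub_distrib, ← Finset.mul_sum, ← Finset.sum_mul,
        hDS1, one_mul, hΦ]
    have h4 : ∀ y, ∑ b, ∑ x, DS y * (DA b * DS x * (γ * φ x - φ y))
        = DS y * (γ * Φ - φ y) := by
      intro y
      simp only [← Finset.mul_sum, h2, h3]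
    have h6 : ∑ y, DS y * (γ * Φ - φ y) = γ * Φ - Φ := by
      have e : ∀ y, DS y * (γ * Φ - φ y) = DS y * (γ * Φ) - DS y * φ y := by
        intro y; ring
      rw [Finset.sum_congr rfl fun y _ => e y]
      simp only [e, Finset.sum_sub_distrib, ← Finset.sum_mul, hDS1, one_mul, hΦ]
    simp only [h1, Finset.sum_add_distrib, h4, h6]
  rw [hS, hT]
  ring
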